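/- Let φ : ℝ → ℝ be concave and integrable against Gaussians, and σ₀ ∈ (0,1]. Then sup_{σ₀ ≤ σ ≤ 1} E_{N(0,σ²t)}[φ] = E_{N(0,σ₀²t)}[φ], i.e., for concave φ the G-normal expectation is the Gaussian expectation with the smallest variance σ₀²t. -/

import Mathlib

open MeasureTheory Real

/-- Pointwise concavity inequality: shrinking the argument symmetrically
increases `φ y + φ (-y)`. -/
lemma concave_symm_shrink (φ : ℝ → ℝ) (hconc : ConcaveOn ℝ Set.univ φ)
    {s : ℝ} (hs0 : 0 ≤ s) (hs1 : s ≤ 1) (y : ℝ) :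
    φ y + φ (-y) ≤ φ (s * y) + φ (-(s * y)) := by
  have h1 := hconc.2 (Set.mem_univ y) (Set.mem_univ (-y))
    (by linarith : (0:ℝ) ≤ (1 + s) / 2) (by linarith : (0:ℝ) ≤ (1 - s) / 2)
    (by ring : (1 + s) / 2 + (1 - s) / 2 = 1)
  have h2 := hconc.2 (Set.mem_univ y) (Set.mem_univ (-y))
    (by linarith : (0:ℝ) ≤ (1 - s) / 2) (by linarith : (0:ℝ) ≤ (1 + s) / 2)
    (by ring : (1 - s) / 2 + (1 + s) / 2 = 1)
  simp only [smul_eq_mul] at h1 h2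
  have e1 : (1 + s) / 2 * y + (1 - s) / 2 * (-y) = s * y := by ring
  have e2 : (1 - s) / 2 * y + (1 + s) / 2 * (-y) = -(s * y) := by ring
  rw [e1] at h1
  rw [e2] at h2
  nlinarith [h1, h2]

/-- Monotonicity of the scaled Gaussian-type integral in the scale `c`. -/
lemma gauss_int_mono (φ : ℝ → ℝ) (hconc : ConcaveOn ℝ Set.univ φ)
    (hint : ∀ v : ℝ, 0 < v →
      Integrable (fun x : ℝ => φ x * Real.exp (-x ^ 2 / (2 * v))))
    {c₀ c : ℝ} (h0 : 0 < c₀) (hcc : c₀ ≤ c) :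
    (∫ u : ℝ, φ (c * u) * Real.exp (-u ^ 2 / 2)) ≤
      ∫ u : ℝ, φ (c₀ * u) * Real.exp (-u ^ 2 / 2) := by
  have hc : 0 < c := lt_of_lt_of_le h0 hcc
  -- integrability of u ↦ φ (a*u) * exp (-u^2/2) for a > 0
  have key : ∀ a : ℝ, 0 < a →
      Integrable (fun u : ℝ => φ (a * u) * Real.exp (-u ^ 2 / 2)) := by
    intro a ha
    have h := (hint (a ^ 2) (by positivity)).comp_mul_left' (ne_of_gt ha)
    refine h.congr (Filter.Eventually.of_forall fun u => ?_)
    field_simp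
  -- symmetrization: ∫ f = ∫ f(-u)
  have symm : ∀ a : ℝ,
      (∫ u : ℝ, φ (a * u) * Real.exp (-u ^ 2 / 2)) =
        ∫ u : ℝ, φ (a * (-u)) * Real.exp (-u ^ 2 / 2) := by
    intro a
    rw [← integral_neg_eq_self (fun u : ℝ => φ (a * (-u)) * Real.exp (-u ^ 2 / 2))]
    simp
  have hI0 := key c₀ h0
  have hIc := key c hc
  have hI0' : Integrable (fun u : ℝ => φ (c₀ * (-u)) * Real.exp (-u ^ 2 / 2)) := by
    have := hI0.comp_neg
    simpa using this
  have hIc' : Integrable (fun u : ℝ => φ (c * (-u)) * Real.exp (-u ^ 2 / 2)) := by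
    have := hIc.comp_neg
    simpa using this
  have main : (∫ u : ℝ, (φ (c * u) + φ (c * (-u))) * Real.exp (-u ^ 2 / 2)) ≤
      ∫ u : ℝ, (φ (c₀ * u) + φ (c₀ * (-u))) * Real.exp (-u ^ 2 / 2) := by
    refine integral_mono ?_ ?_ fun u => ?_
    · simpa [add_mul, Pi.add_def] using hIc.add hIc'
    · simpa [add_mul, Pi.add_def] using hI0.add hI0'
    · have hpt := concave_symm_shrink φ hconc
        (by positivity : (0:ℝ) ≤ c₀ / c) (by rw [div_le_one hc]; exact hcc) (c * u)
      have e1 : c₀ / c * (c * u) = c₀ * u := by field_simp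
      rw [e1] at hpt
      have e2 : -(c₀ * u) = c₀ * (-u) := by ring
      have e3 : -(c * u) = c * (-u) := by ring
      rw [e2, e3] at hpt
      have hexp : (0:ℝ) ≤ Real.exp (-u ^ 2 / 2) := (Real.exp_pos _).le
      exact mul_le_mul_of_nonneg_right hpt hexp
  have expand : ∀ a : ℝ, 0 < a →
      (∫ u : ℝ, (φ (a * u) + φ (a * (-u))) * Real.exp (-u ^ 2 / 2)) =
        2 * ∫ u : ℝ, φ (a * u) * Real.exp (-u ^ 2 / 2) := by
    intro a ha
    have hIa := key a ha
    have hIa' : Integrable (fun u : ℝ => φ (a * (-u)) * Real.exp (-u ^ 2 / 2)) := by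
      have := hIa.comp_neg
      simpa using this
    calc (∫ u : ℝ, (φ (a * u) + φ (a * (-u))) * Real.exp (-u ^ 2 / 2))
        = (∫ u : ℝ, φ (a * u) * Real.exp (-u ^ 2 / 2)) +
            ∫ u : ℝ, φ (a * (-u)) * Real.exp (-u ^ 2 / 2) := by
          rw [← integral_add hIa hIa']
          congr 1
          funext u
          ring
      _ = 2 * ∫ u : ℝ, φ (a * u) * Real.exp (-u ^ 2 / 2) := by
          rw [← symm a]; ring
  rw [expand c hc, expand c₀ h0] at main
  linarith

/-- For concave `φ` (integrable against Gaussians), the G-normal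
expectation `sup_{σ₀ ≤ σ ≤ 1} E_{N(0,σ²t)}[φ]` is attained at `σ = σ₀`, i.e. equals
the Gaussian expectation with the smallest variance `σ₀²t`. -/
theorem G_normal_expectation_concave
    (σ₀ t : ℝ) (hσ0 : 0 < σ₀) (hσ1 : σ₀ ≤ 1) (ht : 0 < t)
    (φ : ℝ → ℝ) (hconc : ConcaveOn ℝ Set.univ φ)
    (hint : ∀ v : ℝ, 0 < v →
      Integrable (fun x : ℝ => φ x * Real.exp (-x ^ 2 / (2 * v)))) :
    sSup ((fun σ : ℝ =>
        (1 / Real.sqrt (2 * π * σ ^ 2 * t)) *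
          ∫ x : ℝ, φ x * Real.exp (-x ^ 2 / (2 * σ ^ 2 * t))) '' Set.Icc σ₀ 1) =
      (1 / Real.sqrt (2 * π * σ₀ ^ 2 * t)) *
        ∫ x : ℝ, φ x * Real.exp (-x ^ 2 / (2 * σ₀ ^ 2 * t)) := by
  set f : ℝ → ℝ := fun σ =>
    (1 / Real.sqrt (2 * π * σ ^ 2 * t)) *
      ∫ x : ℝ, φ x * Real.exp (-x ^ 2 / (2 * σ ^ 2 * t)) with hf
  -- rewrite f σ via substitution x = σ√t · u
  have hrw : ∀ σ : ℝ, 0 < σ →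
      f σ = (1 / Real.sqrt (2 * π)) *
        ∫ u : ℝ, φ (σ * Real.sqrt t * u) * Real.exp (-u ^ 2 / 2) := by
    intro σ hσ
    have hc : 0 < σ * Real.sqrt t := by positivity
    have hsub := Measure.integral_comp_mul_left
      (fun x : ℝ => φ x * Real.exp (-x ^ 2 / (2 * σ ^ 2 * t))) (σ * Real.sqrt t)
    have hexp : ∀ u : ℝ,
        Real.exp (-(σ * Real.sqrt t * u) ^ 2 / (2 * σ ^ 2 * t)) =
          Real.exp (-u ^ 2 / 2) := by
      intro u
      congr 1
      have hst : Real.sqrt t ^ 2 = t := Real.sq_sqrt ht.le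
      field_simp
      ring_nf
      rw [hst]
      ring
    simp only [hexp] at hsub
    have hsqrt : Real.sqrt (2 * π * σ ^ 2 * t) =
        Real.sqrt (2 * π) * (σ * Real.sqrt t) := by
      rw [show 2 * π * σ ^ 2 * t = (2 * π) * (σ * Real.sqrt t) ^ 2 by
        rw [mul_pow, Real.sq_sqrt ht.le]; ring,
        Real.sqrt_mul (by positivity), Real.sqrt_sq hc.le]
    rw [hf]
    simp only []
    rw [hsub, hsqrt, smul_eq_mul, abs_of_pos (inv_pos.2 hc)]
    have h2π : (0:ℝ) < Real.sqrt (2 * π) := Real.sqrt_pos.2 (by positivity)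
    field_simp
  -- monotonicity : f σ ≤ f σ₀ on Icc σ₀ 1
  have hmono : ∀ σ ∈ Set.Icc σ₀ 1, f σ ≤ f σ₀ := by
    intro σ hσmem
    have hσpos : 0 < σ := lt_of_lt_of_le hσ0 hσmem.1
    rw [hrw σ hσpos, hrw σ₀ hσ0]
    have h2π : (0:ℝ) ≤ 1 / Real.sqrt (2 * π) := by positivity
    refine mul_le_mul_of_nonneg_left ?_ h2π
    exact gauss_int_mono φ hconc hint (by positivity)
      (by have := hσmem.1; nlinarith [Real.sqrt_pos.2 ht])
  -- conclude via IsGreatest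
  have hgr : IsGreatest (f '' Set.Icc σ₀ 1) (f σ₀) := by
    constructor
    · exact ⟨σ₀, ⟨le_refl _, hσ1⟩, rfl⟩
    · rintro y ⟨σ, hσmem, rfl⟩
      exact hmono σ hσmem
  exact hgr.csSup_eq
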